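/- Let K be a field of characteristic zero, r ≥ 2, and let L be the free nilpotent Lie algebra of rank r and step 3 over K, with G_1 the span of the generators. Fix p ∈ L* and set h_1(p) = {ξ ∈ G_1 : p(⁅ξ,η⁆) = 0 for all η ∈ C_1(L)}. If γ ∈ h_1(p) satisfies p(⁅δ,γ⁆) = 0 for all δ ∈ h_1(p), then there exists η ∈ C_1(L) such that p(⁅ξ,γ⁆) = p(⁅ξ,η⁆) for all ξ ∈ G_1. (That is, B_p(·,γ)|_{G_1} lies in the image of the map B_p^{12} : C_1(L) → G_1*.) -/

import Mathlib

/-- The free nilpotent Lie algebra of rank `r` and step `s` over `K`: the quotient of the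
free Lie algebra `F` on `r` generators by the `s`-th term `C_s(F)` of its lower central
series (`C_0 = F`, `C_{k+1} = ⁅F, C_k⁆`). -/
abbrev FreeNilpotentLie (K : Type*) [Field K] (r s : ℕ) :=
  FreeLieAlgebra K (Fin r) ⧸
    LieModule.lowerCentralSeries K (FreeLieAlgebra K (Fin r)) (FreeLieAlgebra K (Fin r)) s

/-- The canonical generators `X_1, …, X_r` of the free nilpotent Lie algebra, i.e. the images
of the free generators. -/
noncomputable def FreeNilpotentLie.gen (K : Type*) [Field K] (r s : ℕ) (i : Fin r) :
    FreeNilpotentLie K r s :=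
  LieSubmodule.Quotient.mk' _ (FreeLieAlgebra.of K i)

/-- `G₁`: the `K`-span of the generators. -/
noncomputable def FreeNilpotentLie.G1 (K : Type*) [Field K] (r s : ℕ) :
    Submodule K (FreeNilpotentLie K r s) :=
  Submodule.span K (Set.range (FreeNilpotentLie.gen K r s))

/-- Let `L` be the free nilpotent Lie algebra of rank `r ≥ 2` and step 3,
`p ∈ L*`, and `γ ∈ h₁(p) = {ξ ∈ G₁ : p ⁅ξ, η⁆ = 0 ∀ η ∈ C₁(L)}`.  If `p ⁅δ, γ⁆ = 0` for
all `δ ∈ h₁(p)`, then `B_p(·, γ)|_{G₁}` lies in the image of `B_p^{12} : C₁(L) → G₁*`. -/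
theorem Bp_gamma_mem_image_B12
    (K : Type*) [Field K] [CharZero K] (r : ℕ) (hr : 2 ≤ r)
    (p : Module.Dual K (FreeNilpotentLie K r 3))
    (γ : FreeNilpotentLie K r 3)
    (hγ1 : γ ∈ FreeNilpotentLie.G1 K r 3)
    (hγ2 : ∀ η ∈ LieModule.lowerCentralSeries K (FreeNilpotentLie K r 3)
      (FreeNilpotentLie K r 3) 1, p ⁅γ, η⁆ = 0)
    (hγ3 : ∀ δ, δ ∈ FreeNilpotentLie.G1 K r 3 →
      (∀ η ∈ LieModule.lowerCentralSeries K (FreeNilpotentLie K r 3)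
        (FreeNilpotentLie K r 3) 1, p ⁅δ, η⁆ = 0) → p ⁅δ, γ⁆ = 0) :
    ∃ η ∈ LieModule.lowerCentralSeries K (FreeNilpotentLie K r 3)
      (FreeNilpotentLie K r 3) 1,
      ∀ ξ ∈ FreeNilpotentLie.G1 K r 3, p ⁅ξ, γ⁆ = p ⁅ξ, η⁆ := by
  classical
  let L := FreeNilpotentLie K r 3
  let C1 := LieModule.lowerCentralSeries K (FreeNilpotentLie K r 3) (FreeNilpotentLie K r 3) 1
  let V := FreeNilpotentLie.G1 K r 3
  haveI : FiniteDimensional K V :=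
    FiniteDimensional.span_of_finite K (Set.finite_range _)
  -- bilinear form B(x,y) = p ⁅x,y⁆
  let B : L →ₗ[K] L →ₗ[K] K :=
    (LinearMap.llcomp K L L K p).comp (LieModule.toEnd K L L : L →ₗ[K] Module.End K L)
  have hB : ∀ x y : L, B x y = p ⁅x, y⁆ := fun x y => rfl
  -- T : C1 → Dual K V
  let T : C1 →ₗ[K] Module.Dual K V :=
    { toFun := fun η => (B.flip (η : L)).comp V.subtype
      map_add' := by intro a b; ext x; simp [B]
      map_smul' := by intro c a; ext x; simp [B] }
  let U := LinearMap.range T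
  let f : Module.Dual K V := (B.flip γ).comp V.subtype
  have hf : f ∈ U := by
    haveI : FiniteDimensional K U := FiniteDimensional.finiteDimensional_submodule U
    rw [← Subspace.dualCoannihilator_dualAnnihilator_eq (W := U),
      Submodule.mem_dualAnnihilator]
    intro w hw
    rw [Submodule.mem_dualCoannihilator] at hw
    have hw' : ∀ η ∈ C1, p ⁅(w : L), η⁆ = 0 := by
      intro η hη
      have := hw (T ⟨η, hη⟩) ⟨⟨η, hη⟩, rfl⟩
      simpa [T, B] using this
    have := hγ3 (w : L) w.2 hw'
    simpa [f, B] using this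
  obtain ⟨η, hη⟩ := hf
  refine ⟨(η : L), η.2, ?_⟩
  intro ξ hξ
  have := DFunLike.congr_fun hη ⟨ξ, hξ⟩
  simpa [T, B, f] using this.symm
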